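/- arXiv:1711.02381 — 3 statements merged into one kernel-verified Lean document; each statement's English description precedes it below -/
import Mathlib

section
/- Let A be the (n−2)×n integer matrix from the Gale-dual construction (rows: ([2,k+2], −[1,k+2], 0,…,[1,2],…,0) for k=1,…,n−3 and a final all-ones row, where [i,j]=det(b_i,b_j) for rows b_i of an n×2 matrix B whose rows span ℤ² and sum to zero). Then every maximal ((n−2)×(n−2)) minor of A equals ±[1,2]^{n−4}·[i,j] for some pair i ≠ j. -/
/-- The determinant of the `2 × 2` matrix with rows `u` and `w`. -/
def det2 {R : Type*} [CommRing R] (u w : Fin 2 → R) : R := u 0 * w 1 - u 1 * w 0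

private lemma sum_ite_val {N : ℕ} (v : ℕ) (hv : v < N) (u : Fin N → ℤ) :
    ∑ j : Fin N, (if (j : ℕ) = v then u j else 0) = u ⟨v, hv⟩ := by
  rw [Finset.sum_congr rfl (g := fun j => if j = (⟨v, hv⟩ : Fin N) then u j else 0)
      (fun j _ => by simp [Fin.ext_iff])]
  simp [Finset.sum_ite_eq']

private lemma sum3 {N : ℕ} {x y z : ℕ} (hx : x < N) (hy : y < N) (hz : z < N)
    (hxy : x ≠ y) (hxz : x ≠ z) (hyz : y ≠ z) (a b c : ℤ) (u : Fin N → ℤ) :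
    ∑ j : Fin N,
        (if (j : ℕ) = x then a else if (j : ℕ) = y then b else if (j : ℕ) = z then c else 0) * u j
      = a * u ⟨x, hx⟩ + b * u ⟨y, hy⟩ + c * u ⟨z, hz⟩ := by
  have h : ∀ j : Fin N,
      (if (j : ℕ) = x then a else if (j : ℕ) = y then b else if (j : ℕ) = z then c else 0) * u j
        = (if (j : ℕ) = x then a * u j else 0) + ((if (j : ℕ) = y then b * u j else 0)
            + (if (j : ℕ) = z then c * u j else 0)) := by
    intro j
    by_cases h1 : (j : ℕ) = x
    · simp [h1, hxy, hxz]
    · by_cases h2 : (j : ℕ) = y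
      · simp [h1, h2, hyz, Ne.symm hxy]
      · by_cases h3 : (j : ℕ) = z <;> simp [h1, h2, h3, Ne.symm hxz, Ne.symm hyz]
  rw [Finset.sum_congr rfl fun j _ => h j, Finset.sum_add_distrib, Finset.sum_add_distrib,
    sum_ite_val x hx, sum_ite_val y hy, sum_ite_val z hz]
  ring

set_option maxHeartbeats 2000000 in
/-- For the `(n−2) × n` Gale-dual matrix `A` built from an `n × 2` integer matrix
`B` whose rows span `ℤ²` and sum to zero, with `[1,2] := det(b_1,b_2) ≠ 0`, every maximal
(`(n−2) × (n−2)`) minor of `A` equals `± [1,2]^{n−4} · [i,j]` for some pair `i ≠ j`. -/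
theorem maximal_minors_of_gale_dual_matrix
    (n : ℕ) (hn : 4 ≤ n) (B : Matrix (Fin n) (Fin 2) ℤ)
    (hspan : Submodule.span ℤ (Set.range fun i : Fin n => B i) = ⊤)
    (hsum : ∀ k : Fin 2, ∑ i : Fin n, B i k = 0)
    (h12 : det2 (B ⟨0, by omega⟩) (B ⟨1, by omega⟩) ≠ 0)
    (A : Matrix (Fin (n - 2)) (Fin n) ℤ)
    (hA : ∀ (k : Fin (n - 2)) (j : Fin n),
      A k j =
        if (k : ℕ) < n - 3 then
          (if (j : ℕ) = 0 then
              det2 (B ⟨1, by omega⟩) (B ⟨(k : ℕ) + 2, by have := k.isLt; omega⟩)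
            else if (j : ℕ) = 1 then
              -det2 (B ⟨0, by omega⟩) (B ⟨(k : ℕ) + 2, by have := k.isLt; omega⟩)
            else if (j : ℕ) = (k : ℕ) + 2 then det2 (B ⟨0, by omega⟩) (B ⟨1, by omega⟩)
            else 0)
        else 1) :
    ∀ f : Fin (n - 2) ↪ Fin n, ∃ i j : Fin n, i ≠ j ∧
      ((A.submatrix id f).det
          = det2 (B ⟨0, by omega⟩) (B ⟨1, by omega⟩) ^ (n - 4) * det2 (B i) (B j) ∨
        (A.submatrix id f).det
          = -(det2 (B ⟨0, by omega⟩) (B ⟨1, by omega⟩) ^ (n - 4) * det2 (B i) (B j))) := by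
  obtain ⟨m, rfl⟩ : ∃ m, n = m + 4 := ⟨n - 4, by omega⟩
  intro f
  classical
  set d : ℤ := det2 (B ⟨0, by omega⟩) (B ⟨1, by omega⟩) with hd
  have hdne : d ≠ 0 := h12
  -- the two missing columns
  set T : Finset (Fin (m + 4)) := Finset.univ \ Finset.image ⇑f Finset.univ with hT
  have hTcard : T.card = 2 := by
    rw [hT, Finset.card_sdiff_of_subset (Finset.subset_univ _), Finset.card_univ, Fintype.card_fin,
      Finset.card_image_of_injective _ f.injective, Finset.card_univ, Fintype.card_fin]
    omega
  obtain ⟨p, q, hpq, hpqT⟩ := Finset.card_eq_two.mp hTcard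
  have hfp : ∀ l, f l ≠ p := by
    intro l h
    have hp : p ∈ T := by rw [hpqT]; exact Finset.mem_insert_self _ _
    rw [hT, Finset.mem_sdiff] at hp
    exact hp.2 (Finset.mem_image.mpr ⟨l, Finset.mem_univ _, h⟩)
  have hfq : ∀ l, f l ≠ q := by
    intro l h
    have hq : q ∈ T := by
      rw [hpqT]; exact Finset.mem_insert_of_mem (Finset.mem_singleton_self _)
    rw [hT, Finset.mem_sdiff] at hq
    exact hq.2 (Finset.mem_image.mpr ⟨l, Finset.mem_univ _, h⟩)
  set r : Fin 2 → Fin (m + 4) := fun t => if t = 0 then p else q with hr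
  have hr0 : r 0 = p := by simp [hr]
  have hr1 : r 1 = q := by rw [hr]; simp
  have hrPQ : ∀ t, r t = p ∨ r t = q := by
    intro t; fin_cases t
    · left; exact hr0
    · right; exact hr1
  have hrinj : Function.Injective r := by
    intro t s h
    fin_cases t <;> fin_cases s <;> simp_all [hr]
  have hfr : ∀ (l : Fin (m + 4 - 2)) (t : Fin 2), f l ≠ r t := by
    intro l t h
    rcases hrPQ t with h' | h'
    · exact hfp l (h.trans h')
    · exact hfq l (h.trans h')
  -- the row-index equivalence σ
  have hbij : Function.Bijective (Sum.elim ⇑f r) := by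
    rw [Fintype.bijective_iff_injective_and_card]
    constructor
    · rintro (k | t) (k' | t') h <;> simp only [Sum.elim_inl, Sum.elim_inr] at h
      · exact congrArg Sum.inl (f.injective h)
      · exact absurd h (hfr k t')
      · exact absurd h.symm (hfr k' t)
      · exact congrArg Sum.inr (hrinj h)
    · simp only [Fintype.card_sum, Fintype.card_fin]; omega
  set σ : (Fin (m + 4 - 2) ⊕ Fin 2) ≃ Fin (m + 4) := Equiv.ofBijective _ hbij with hσ
  have hσl : ∀ k, σ (Sum.inl k) = f k := fun k => rfl
  have hσr : ∀ t, σ (Sum.inr t) = r t := fun t => rfl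
  -- the matrices N and G
  set N : Matrix (Fin (m + 4)) (Fin (m + 4)) ℤ :=
    Matrix.of (fun i j =>
      Sum.elim (fun k => A k j) (fun t => if j = r t then (1 : ℤ) else 0) (σ.symm i)) with hN
  have hNA : ∀ (k : Fin (m + 4 - 2)) (j : Fin (m + 4)), N (σ (Sum.inl k)) j = A k j := by
    intro k j; rw [hN]; simp
  have hNr : ∀ (t : Fin 2) (j : Fin (m + 4)),
      N (σ (Sum.inr t)) j = if j = r t then 1 else 0 := by
    intro t j; rw [hN]; simp
  set G : Matrix (Fin (m + 4)) (Fin (m + 4)) ℤ :=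
    Matrix.of (fun i j => if (j : ℕ) = 0 then B i 0 else if (j : ℕ) = 1 then B i 1
      else if (i : ℕ) = (j : ℕ) then (1 : ℤ) else 0) with hG
  have hG0 : ∀ (x c : Fin (m + 4)), (c : ℕ) = 0 → G x c = B x 0 := by
    intro x c h; rw [hG]; simp only [Matrix.of_apply]; rw [if_pos h]
  have hG1 : ∀ (x c : Fin (m + 4)), (c : ℕ) = 1 → G x c = B x 1 := by
    intro x c h; rw [hG]; simp only [Matrix.of_apply]; rw [if_neg (by omega), if_pos h]
  have hGu : ∀ (x c : Fin (m + 4)), 2 ≤ (c : ℕ) →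
      G x c = if (x : ℕ) = (c : ℕ) then 1 else 0 := by
    intro x c h; rw [hG]; simp only [Matrix.of_apply]
    rw [if_neg (by omega), if_neg (by omega)]
  have hGmm : ∀ (w v : ℕ) (hw : w < m + 4) (hv : v < m + 4),
      G ⟨w, hw⟩ ⟨v, hv⟩ = if v = 0 then B ⟨w, hw⟩ 0 else if v = 1 then B ⟨w, hw⟩ 1
        else if w = v then 1 else 0 := fun _ _ _ _ => rfl
  -- det N = the minor
  have hP : N.submatrix ⇑σ ⇑σ =
      Matrix.fromBlocks (A.submatrix id ⇑f) (Matrix.of fun k t => A k (r t)) 0 1 := by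
    ext x y
    cases x with
    | inl k =>
      cases y with
      | inl l =>
        simp only [Matrix.submatrix_apply, Matrix.fromBlocks_apply₁₁]
        rw [hNA]; rfl
      | inr t =>
        simp only [Matrix.submatrix_apply, Matrix.fromBlocks_apply₁₂]
        rw [hNA]; rfl
    | inr t =>
      cases y with
      | inl l =>
        simp only [Matrix.submatrix_apply, Matrix.fromBlocks_apply₂₁, Matrix.zero_apply]
        rw [hNr, hσl, if_neg (hfr l t)]
      | inr s =>
        simp only [Matrix.submatrix_apply, Matrix.fromBlocks_apply₂₂, Matrix.one_apply]
        rw [hNr, hσr]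
        by_cases hts : t = s
        · subst hts; simp
        · rw [if_neg (fun h => hts (hrinj h).symm), if_neg hts]
  have hdetN : N.det = (A.submatrix id ⇑f).det := by
    rw [← Matrix.det_submatrix_equiv_self σ N, hP, Matrix.det_fromBlocks_zero₂₁,
      Matrix.det_one, mul_one]
  -- det G = d
  have hbij2 : Function.Bijective (Sum.elim
      (fun t : Fin 2 => (⟨(t : ℕ), by omega⟩ : Fin (m + 4)))
      (fun k : Fin (m + 2) => (⟨(k : ℕ) + 2, by omega⟩ : Fin (m + 4)))) := by
    rw [Fintype.bijective_iff_injective_and_card]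
    constructor
    · rintro (t | k) (t' | k') h <;>
        simp only [Sum.elim_inl, Sum.elim_inr, Fin.mk.injEq] at h
      · exact congrArg Sum.inl (Fin.ext h)
      · exact absurd h (by have := t.isLt; omega)
      · exact absurd h (by have := t'.isLt; omega)
      · exact congrArg Sum.inr (Fin.ext (by omega))
    · simp only [Fintype.card_sum, Fintype.card_fin]; omega
  set e2 : (Fin 2 ⊕ Fin (m + 2)) ≃ Fin (m + 4) := Equiv.ofBijective _ hbij2 with he2
  have he2l : ∀ t : Fin 2, e2 (Sum.inl t) = (⟨(t : ℕ), by omega⟩ : Fin (m + 4)) := fun t => rfl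
  have he2r : ∀ k : Fin (m + 2),
      e2 (Sum.inr k) = (⟨(k : ℕ) + 2, by omega⟩ : Fin (m + 4)) := fun k => rfl
  have hGblocks : G.submatrix ⇑e2 ⇑e2 =
      Matrix.fromBlocks (Matrix.of fun t s : Fin 2 => B ⟨(t : ℕ), by omega⟩ s) 0
        (Matrix.of fun (k : Fin (m + 2)) (t : Fin 2) => G (e2 (Sum.inr k)) (e2 (Sum.inl t))) 1 := by
    ext x y
    cases x with
    | inl t =>
      cases y with
      | inl s =>
        simp only [Matrix.submatrix_apply, Matrix.fromBlocks_apply₁₁, Matrix.of_apply]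
        rw [he2l t, he2l s]
        fin_cases s
        · rw [hG0 _ _ rfl]; rfl
        · rw [hG1 _ _ rfl]; rfl
      | inr k =>
        simp only [Matrix.submatrix_apply, Matrix.fromBlocks_apply₁₂, Matrix.zero_apply]
        rw [he2l t, he2r k, hGu _ _ (by simp), if_neg (by simp; omega)]
    | inr k =>
      cases y with
      | inl t =>
        simp only [Matrix.submatrix_apply, Matrix.fromBlocks_apply₂₁, Matrix.of_apply]
      | inr k' =>
        simp only [Matrix.submatrix_apply, Matrix.fromBlocks_apply₂₂, Matrix.one_apply]
        rw [he2r k, he2r k', hGu _ _ (by simp)]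
        by_cases hkk : k = k'
        · subst hkk; simp
        · rw [if_neg (by simp [Fin.ext_iff] at hkk ⊢; omega), if_neg hkk]
  have hdetG : G.det = d := by
    rw [← Matrix.det_submatrix_equiv_self e2 G, hGblocks, Matrix.det_fromBlocks_zero₁₂,
      Matrix.det_one, mul_one, Matrix.det_fin_two, hd]
    simp [det2]
  -- product entries
  have hmulA : ∀ (k : Fin (m + 4 - 2)) (c : Fin (m + 4)),
      (N * G) (σ (Sum.inl k)) c = ∑ j, A k j * G j c := by
    intro k c; rw [Matrix.mul_apply]
    exact Finset.sum_congr rfl fun j _ => by rw [hNA]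
  have hmulr : ∀ (t : Fin 2) (c : Fin (m + 4)), (N * G) (σ (Sum.inr t)) c = G (r t) c := by
    intro t c; rw [Matrix.mul_apply]
    rw [Finset.sum_congr rfl fun j _ => by rw [hNr]]
    simp [ite_mul, Finset.sum_ite_eq']
  -- column equivalence for the block structure of N * G
  have hbij3 : Function.Bijective (Sum.elim
      (fun l : Fin (m + 4 - 2) => (⟨(l : ℕ) + 2, by have := l.isLt; omega⟩ : Fin (m + 4)))
      (fun t : Fin 2 => (⟨(t : ℕ), by omega⟩ : Fin (m + 4)))) := by
    rw [Fintype.bijective_iff_injective_and_card]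
    constructor
    · rintro (l | t) (l' | t') h <;>
        simp only [Sum.elim_inl, Sum.elim_inr, Fin.mk.injEq] at h
      · exact congrArg Sum.inl (Fin.ext (by omega))
      · exact absurd h (by have := t'.isLt; omega)
      · exact absurd h (by have := t.isLt; omega)
      · exact congrArg Sum.inr (Fin.ext h)
    · simp only [Fintype.card_sum, Fintype.card_fin]; omega
  set eC : (Fin (m + 4 - 2) ⊕ Fin 2) ≃ Fin (m + 4) := Equiv.ofBijective _ hbij3 with heC
  have heCl : ∀ l : Fin (m + 4 - 2),
      eC (Sum.inl l) = (⟨(l : ℕ) + 2, by have := l.isLt; omega⟩ : Fin (m + 4)) := fun l => rfl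
  have heCr : ∀ t : Fin 2, eC (Sum.inr t) = (⟨(t : ℕ), by omega⟩ : Fin (m + 4)) := fun t => rfl
  set UL : Matrix (Fin (m + 2)) (Fin (m + 2)) ℤ :=
    Matrix.of (fun k l => if (k : ℕ) < m + 1 then (if (l : ℕ) = (k : ℕ) then d else 0) else 1)
    with hUL
  set LR : Matrix (Fin 2) (Fin 2) ℤ := Matrix.of (fun t s => B (r t) s) with hLR
  have hdetLR : LR.det = det2 (B p) (B q) := by
    rw [Matrix.det_fin_two, hLR]
    simp only [Matrix.of_apply, hr0, hr1, det2]
  have hblocks : (N * G).submatrix ⇑σ ⇑eC =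
      Matrix.fromBlocks UL 0
        (Matrix.of fun (t : Fin 2) (l : Fin (m + 2)) =>
          (N * G) (σ (Sum.inr t)) (eC (Sum.inl l))) LR := by
    ext x y
    cases x with
    | inl k =>
      cases y with
      | inl l =>
        simp only [Matrix.submatrix_apply, Matrix.fromBlocks_apply₁₁]
        rw [hmulA, heCl l, hUL]
        simp only [Matrix.of_apply]
        by_cases hk : (k : ℕ) < m + 4 - 3
        · rw [Finset.sum_congr rfl (fun j _ => by rw [hA k j, if_pos hk]),
            sum3 (x := 0) (y := 1) (z := (k : ℕ) + 2) (by omega) (by omega)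
              (by have := k.isLt; omega) (by omega) (by omega) (by omega),
            hGmm, hGmm, hGmm]
          simp only [if_neg (show ¬((l : ℕ) + 2 = 0) by omega),
            if_neg (show ¬((l : ℕ) + 2 = 1) by omega),
            if_neg (show ¬((0 : ℕ) = (l : ℕ) + 2) by omega),
            if_neg (show ¬((1 : ℕ) = (l : ℕ) + 2) by omega),
            if_pos (show (k : ℕ) < m + 1 by omega)]
          by_cases hkl : (l : ℕ) = (k : ℕ)
          · simp only [if_pos (show (k : ℕ) + 2 = (l : ℕ) + 2 by omega), if_pos hkl]; ring
          · simp only [if_neg (show ¬((k : ℕ) + 2 = (l : ℕ) + 2) by omega), if_neg hkl]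
            ring
        · rw [Finset.sum_congr rfl (fun j _ => by rw [hA k j, if_neg hk, one_mul]),
            Finset.sum_congr rfl (fun j _ => hGu j _ (Nat.le_add_left 2 _)),
            if_neg (show ¬((k : ℕ) < m + 1) by omega)]
          simp only [Fin.val_mk]
          rw [sum_ite_val ((l : ℕ) + 2) (by have := l.isLt; omega) (fun _ => (1 : ℤ))]
      | inr s =>
        simp only [Matrix.submatrix_apply, Matrix.fromBlocks_apply₁₂, Matrix.zero_apply]
        rw [hmulA, heCr s]
        by_cases hk : (k : ℕ) < m + 4 - 3
        · rw [Finset.sum_congr rfl (fun j _ => by rw [hA k j, if_pos hk]),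
            sum3 (x := 0) (y := 1) (z := (k : ℕ) + 2) (by omega) (by omega)
              (by have := k.isLt; omega) (by omega) (by omega) (by omega)]
          fin_cases s
          · rw [hG0 _ _ rfl, hG0 _ _ rfl, hG0 _ _ rfl]
            simp only [hd, det2]; ring
          · rw [hG1 _ _ rfl, hG1 _ _ rfl, hG1 _ _ rfl]
            simp only [hd, det2]; ring
        · rw [Finset.sum_congr rfl (fun j _ => by rw [hA k j, if_neg hk, one_mul])]
          fin_cases s
          · rw [Finset.sum_congr rfl (fun j _ => hG0 j _ rfl)]; exact hsum 0
          · rw [Finset.sum_congr rfl (fun j _ => hG1 j _ rfl)]; exact hsum 1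
    | inr t =>
      cases y with
      | inl l =>
        simp only [Matrix.submatrix_apply, Matrix.fromBlocks_apply₂₁, Matrix.of_apply]
      | inr s =>
        simp only [Matrix.submatrix_apply, Matrix.fromBlocks_apply₂₂]
        rw [hmulr, heCr s, hLR]
        simp only [Matrix.of_apply]
        fin_cases s
        · rw [hG0 _ _ rfl]; rfl
        · rw [hG1 _ _ rfl]; rfl
  have htri : UL.BlockTriangular ⇑OrderDual.toDual := by
    intro i j hij
    have hij' : (i : ℕ) < (j : ℕ) := hij
    rw [hUL]
    simp only [Matrix.of_apply]
    rw [if_pos (show (i : ℕ) < m + 1 by have := j.isLt; omega),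
      if_neg (show ¬((j : ℕ) = (i : ℕ)) by omega)]
  have hdetUL : UL.det = d ^ (m + 1) := by
    rw [Matrix.det_of_lowerTriangular UL htri, Fin.prod_univ_castSucc]
    have h1 : ∀ i : Fin (m + 1), UL i.castSucc i.castSucc = d := by
      intro i; rw [hUL]
      simp only [Matrix.of_apply, Fin.coe_castSucc]
      rw [if_pos i.isLt]; simp
    have h2 : UL (Fin.last (m + 1)) (Fin.last (m + 1)) = 1 := by
      rw [hUL]; simp only [Matrix.of_apply, Fin.val_last]
      rw [if_neg (show ¬(m + 1 < m + 1) by omega)]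
    rw [Finset.prod_congr rfl (fun i _ => h1 i), h2, Finset.prod_const, Finset.card_univ,
      Fintype.card_fin, mul_one]
  -- the sign
  set π : (Fin (m + 4 - 2) ⊕ Fin 2) ≃ (Fin (m + 4 - 2) ⊕ Fin 2) := eC.trans σ.symm with hπ
  have hsub : (N * G).submatrix ⇑σ ⇑eC = ((N * G).submatrix ⇑σ ⇑σ).submatrix id ⇑π := by
    ext x y
    simp [hπ, Matrix.submatrix_apply]
  have hdet1 : ((N * G).submatrix ⇑σ ⇑eC).det =
      ((Equiv.Perm.sign π : ℤˣ) : ℤ) * (N * G).det := by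
    rw [hsub, Matrix.det_permute', Matrix.det_submatrix_equiv_self]
    norm_cast
  have hdet2 : ((N * G).submatrix ⇑σ ⇑eC).det = d ^ (m + 1) * det2 (B p) (B q) := by
    rw [hblocks, Matrix.det_fromBlocks_zero₁₂, hdetUL, hdetLR]
  have h1 : ((Equiv.Perm.sign π : ℤˣ) : ℤ) * ((A.submatrix id ⇑f).det * d)
      = d ^ (m + 1) * det2 (B p) (B q) := by
    have t1 : ((Equiv.Perm.sign π : ℤˣ) : ℤ) * (N.det * G.det)
        = d ^ (m + 1) * det2 (B p) (B q) := by
      rw [← Matrix.det_mul, ← hdet1, hdet2]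
    rw [hdetN, hdetG] at t1
    exact t1
  have hssq : ((Equiv.Perm.sign π : ℤˣ) : ℤ) * ((Equiv.Perm.sign π : ℤˣ) : ℤ) = 1 := by
    rcases Int.units_eq_one_or (Equiv.Perm.sign π) with hs | hs <;> rw [hs] <;> simp
  have hminor : (A.submatrix id ⇑f).det * d
      = ((Equiv.Perm.sign π : ℤˣ) : ℤ) * (d ^ (m + 1) * det2 (B p) (B q)) := by
    calc (A.submatrix id ⇑f).det * d
        = (((Equiv.Perm.sign π : ℤˣ) : ℤ) * ((Equiv.Perm.sign π : ℤˣ) : ℤ))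
            * ((A.submatrix id ⇑f).det * d) := by rw [hssq, one_mul]
      _ = ((Equiv.Perm.sign π : ℤˣ) : ℤ)
            * (((Equiv.Perm.sign π : ℤˣ) : ℤ) * ((A.submatrix id ⇑f).det * d)) := by ring
      _ = ((Equiv.Perm.sign π : ℤˣ) : ℤ) * (d ^ (m + 1) * det2 (B p) (B q)) := by rw [h1]
  rcases Int.units_eq_one_or (Equiv.Perm.sign π) with hs | hs
  · refine ⟨p, q, hpq, Or.inl ?_⟩
    show (A.submatrix id ⇑f).det = d ^ m * det2 (B p) (B q)
    refine mul_right_cancel₀ hdne ?_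
    rw [hminor, hs]
    simp only [Units.val_one, one_mul]
    ring
  · refine ⟨p, q, hpq, Or.inr ?_⟩
    show (A.submatrix id ⇑f).det = -(d ^ m * det2 (B p) (B q))
    refine mul_right_cancel₀ hdne ?_
    rw [hminor, hs]
    simp only [Units.val_neg, Units.val_one]
    ring
end

section
/- Let B be an n×1 integer matrix (a column vector) with entries b_1,…,b_n summing to zero, defining the homogeneous lattice ideal I_B = (x^{l⁺} − x^{l⁻} : l ∈ ℤB) in k[x_1,…,x_n]. Then deg(I_B) = Σ_{i : b_i > 0} b_i. -/
private lemma toNat_natCast_mul (m : ℕ) (a : ℤ) : ((m : ℤ) * a).toNat = m * a.toNat := by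
  rcases le_or_gt 0 a with h | h
  · lift a to ℕ using h
    rw [← Nat.cast_mul, Int.toNat_natCast, Int.toNat_natCast]
  · rw [Int.toNat_of_nonpos (mul_nonpos_iff.2 (Or.inl ⟨Int.natCast_nonneg m, h.le⟩)),
      Int.toNat_of_nonpos h.le, mul_zero]

private lemma symm_apply {n : ℕ} (f : Fin n → ℕ) (i : Fin n) :
    (Finsupp.equivFunOnFinite.symm f) i = f i := rfl

private lemma finsupp_sum_eq {n : ℕ} (f : Fin n → ℕ) :
    (Finsupp.equivFunOnFinite.symm f).sum (fun _ e => e) = ∑ i, f i := by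
  rw [Finsupp.sum_fintype]
  · simp [symm_apply]
  · intro _; rfl

private lemma mem_span_single {n : ℕ} (b : Fin n → ℤ) (k : ℤ) :
    (MvPolynomial.monomial (Finsupp.equivFunOnFinite.symm fun i => (k * b i).toNat) (1 : ℚ)
      - MvPolynomial.monomial (Finsupp.equivFunOnFinite.symm fun i => (-(k * b i)).toNat) 1)
    ∈ Ideal.span {MvPolynomial.monomial
          (Finsupp.equivFunOnFinite.symm fun i => (b i).toNat) (1 : ℚ)
        - MvPolynomial.monomial (Finsupp.equivFunOnFinite.symm fun i => (-b i).toNat) 1} := by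
  set μ : Fin n →₀ ℕ := Finsupp.equivFunOnFinite.symm fun i => (b i).toNat with hμ
  set ν : Fin n →₀ ℕ := Finsupp.equivFunOnFinite.symm fun i => (-b i).toNat with hν
  have key : ∀ m : ℕ,
      (Finsupp.equivFunOnFinite.symm fun i => ((m : ℤ) * b i).toNat) = m • μ ∧
      (Finsupp.equivFunOnFinite.symm fun i => (-((m : ℤ) * b i)).toNat) = m • ν := by
    intro m
    constructor
    · ext i
      simp only [symm_apply, Finsupp.smul_apply, hμ, smul_eq_mul]
      exact toNat_natCast_mul m (b i)
    · ext i
      simp only [symm_apply, Finsupp.smul_apply, hν, smul_eq_mul]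
      rw [show -((m : ℤ) * b i) = (m : ℤ) * (-b i) by ring, toNat_natCast_mul]
  have pow_mem : ∀ m : ℕ,
      ((MvPolynomial.monomial (m • μ) (1 : ℚ)) - MvPolynomial.monomial (m • ν) 1)
        ∈ Ideal.span {(MvPolynomial.monomial μ (1 : ℚ)) - MvPolynomial.monomial ν 1} := by
    intro m
    have h1 : (MvPolynomial.monomial (m • μ) (1 : ℚ)) = (MvPolynomial.monomial μ (1 : ℚ)) ^ m := by
      rw [MvPolynomial.monomial_pow, one_pow]
    have h2 : (MvPolynomial.monomial (m • ν) (1 : ℚ)) = (MvPolynomial.monomial ν (1 : ℚ)) ^ m := by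
      rw [MvPolynomial.monomial_pow, one_pow]
    rw [h1, h2]
    exact Ideal.mem_span_singleton.2 (sub_dvd_pow_sub_pow _ _ m)
  rcases Int.eq_nat_or_neg k with ⟨m, rfl | rfl⟩
  · rw [(key m).1, (key m).2]
    exact pow_mem m
  · have e1 : (fun i => (-(m : ℤ) * b i).toNat) = fun i => (-((m : ℤ) * b i)).toNat := by
      funext i; rw [neg_mul]
    have e2 : (fun i => (-(-(m : ℤ) * b i)).toNat) = fun i => ((m : ℤ) * b i).toNat := by
      funext i; rw [neg_mul, neg_neg]
    rw [e1, e2, (key m).1, (key m).2]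
    have := neg_mem (pow_mem m)
    rwa [neg_sub] at this

/-- Let `b = (b_1,…,b_n)` be a nonzero integer vector with `Σ b_i = 0`,
generating the rank-1 lattice `ℤ·b ⊆ ℤⁿ`, and let `I_B` be the associated homogeneous lattice
ideal, generated by the binomials `x^{l⁺} − x^{l⁻}` for `l ∈ ℤ·b`.  Then `I_B` is principal,
generated by the binomial `x^{b⁺} − x^{b⁻}`, whose (total) degree — the degree of `I_B` —
equals `Σ_{i : b_i > 0} b_i`. -/
theorem degree_codim_one_lattice_ideal
    (n : ℕ) (b : Fin n → ℤ) (hb : b ≠ 0) (hsum : ∑ i, b i = 0) :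
    Ideal.span {f : MvPolynomial (Fin n) ℚ |
        ∃ l ∈ (Submodule.span ℤ {b} : Submodule ℤ (Fin n → ℤ)),
          f = MvPolynomial.monomial (Finsupp.equivFunOnFinite.symm fun i => (l i).toNat) 1
              - MvPolynomial.monomial (Finsupp.equivFunOnFinite.symm fun i => (-l i).toNat) 1}
      = Ideal.span
          {MvPolynomial.monomial (Finsupp.equivFunOnFinite.symm fun i => (b i).toNat) (1 : ℚ)
            - MvPolynomial.monomial (Finsupp.equivFunOnFinite.symm fun i => (-b i).toNat) 1} ∧
    (MvPolynomial.monomial (Finsupp.equivFunOnFinite.symm fun i => (b i).toNat) (1 : ℚ)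
        - MvPolynomial.monomial (Finsupp.equivFunOnFinite.symm fun i => (-b i).toNat) 1).totalDegree
      = ∑ i ∈ Finset.univ.filter (fun i => 0 < b i), (b i).toNat := by
  classical
  set μ : Fin n →₀ ℕ := Finsupp.equivFunOnFinite.symm fun i => (b i).toNat with hμ
  set ν : Fin n →₀ ℕ := Finsupp.equivFunOnFinite.symm fun i => (-b i).toNat with hν
  have hμν : μ ≠ ν := by
    obtain ⟨i, hi⟩ : ∃ i, b i ≠ 0 := by
      by_contra h
      push_neg at h
      exact hb (funext h)
    intro h
    have := DFunLike.congr_fun h i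
    simp only [hμ, hν, symm_apply] at this
    omega
  have hD : ∑ i, (b i).toNat = ∑ i, (-b i).toNat := by
    have : ((∑ i, (b i).toNat : ℕ) : ℤ) - ((∑ i, (-b i).toNat : ℕ) : ℤ) = ∑ i, b i := by
      push_cast
      rw [← Finset.sum_sub_distrib]
      congr 1; funext i; omega
    rw [hsum] at this
    omega
  constructor
  · apply le_antisymm
    · rw [Ideal.span_le]
      rintro f ⟨l, hl, rfl⟩
      obtain ⟨k, rfl⟩ := Submodule.mem_span_singleton.1 hl
      have hk : ∀ i, (k • b) i = k * b i := fun i => rfl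
      simp only [hk]
      exact mem_span_single b k
    · rw [Ideal.span_le, Set.singleton_subset_iff]
      apply Ideal.subset_span
      exact ⟨b, Submodule.mem_span_singleton_self b, rfl⟩
  · have hsum_filter : ∑ i, (b i).toNat
        = ∑ i ∈ Finset.univ.filter (fun i => 0 < b i), (b i).toNat := by
      symm
      apply Finset.sum_subset (Finset.filter_subset _ _)
      intro i _ h
      simp only [Finset.mem_filter, Finset.mem_univ, true_and] at h
      omega
    rw [← hsum_filter]
    apply le_antisymm
    · calc (MvPolynomial.monomial μ (1 : ℚ) - MvPolynomial.monomial ν 1).totalDegree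
          ≤ max (MvPolynomial.monomial μ (1 : ℚ)).totalDegree
              (MvPolynomial.monomial ν (1 : ℚ)).totalDegree :=
            MvPolynomial.totalDegree_sub _ _
        _ ≤ ∑ i, (b i).toNat := by
            rw [MvPolynomial.totalDegree_monomial _ (one_ne_zero),
              MvPolynomial.totalDegree_monomial _ (one_ne_zero), hμ, hν,
              finsupp_sum_eq, finsupp_sum_eq, ← hD, max_self]
    · have hmem : μ ∈ (MvPolynomial.monomial μ (1 : ℚ) - MvPolynomial.monomial ν 1).support := by
        rw [MvPolynomial.mem_support_iff, MvPolynomial.coeff_sub,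
          MvPolynomial.coeff_monomial, MvPolynomial.coeff_monomial,
          if_pos rfl, if_neg (fun h => hμν h.symm)]
        norm_num
      have := MvPolynomial.le_totalDegree hmem
      rwa [hμ, finsupp_sum_eq] at this
end

section
/- (Gale duality for faces) Let A be a d×n integer matrix with (1,…,1) in its row space and P = Conv(a_1,…,a_n); let B be an n×(n−d) integer matrix whose columns span ker(A) over ℚ, with rows b_i. For I ⊆ {1,…,n}, there exists a face β of P with {i : a_i ∈ β} = I if and only if there exist positive real numbers t_i (i ∈ I^c) with Σ_{i∈I^c} t_i b_i = 0. -/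
open Matrix

lemma gale_AB {d n m : ℕ}
    (A : Matrix (Fin d) (Fin n) ℤ) (B : Matrix (Fin n) (Fin m) ℤ)
    (hGale : LinearMap.ker (Matrix.mulVecLin (A.map ((↑) : ℤ → ℚ))) =
      Submodule.span ℚ (Set.range fun k : Fin m => fun i : Fin n => (B i k : ℚ))) :
    (A.map ((↑) : ℤ → ℚ)) * (B.map ((↑) : ℤ → ℚ)) = 0 := by
  ext r k
  have hcol : (fun i => (B i k : ℚ)) ∈ LinearMap.ker (Matrix.mulVecLin (A.map ((↑) : ℤ → ℚ))) := by
    rw [hGale]; exact Submodule.subset_span ⟨k, rfl⟩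
  have := congrFun (LinearMap.mem_ker.mp hcol) r
  simpa [Matrix.mulVecLin_apply, Matrix.mulVec, dotProduct, Matrix.mul_apply,
    Matrix.map_apply] using this

lemma gale_transfer {d n m : ℕ}
    (A : Matrix (Fin d) (Fin n) ℤ) (B : Matrix (Fin n) (Fin m) ℤ)
    (hGale : LinearMap.ker (Matrix.mulVecLin (A.map ((↑) : ℤ → ℚ))) =
      Submodule.span ℚ (Set.range fun k : Fin m => fun i : Fin n => (B i k : ℚ)))
    (u : Fin n → ℝ) (hu : ∀ k, ∑ i, u i * (B i k : ℝ) = 0) :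
    ∃ w : Fin d → ℝ, ∀ i, u i = ∑ r, (A r i : ℝ) * w r := by
  classical
  set Aq : Matrix (Fin d) (Fin n) ℚ := A.map ((↑) : ℤ → ℚ) with hAq
  set Bq : Matrix (Fin n) (Fin m) ℚ := B.map ((↑) : ℤ → ℚ) with hBq
  have hAB : Aq * Bq = 0 := gale_AB A B hGale
  have hspan : Submodule.span ℚ (Set.range fun k : Fin m => fun i : Fin n => (B i k : ℚ))
      = LinearMap.range (Matrix.mulVecLin Bq) := by
    rw [Matrix.range_mulVecLin]
    congr 1
  -- rank bookkeeping
  have hrnA := LinearMap.finrank_range_add_finrank_ker (Matrix.mulVecLin Aq)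
  have hrnBt := LinearMap.finrank_range_add_finrank_ker (Matrix.mulVecLin Bqᵀ)
  have hkerA : Module.finrank ℚ (LinearMap.ker Aq.mulVecLin) = Bq.rank := by
    rw [hGale, hspan]; rfl
  have hAt : Aqᵀ.rank = Aq.rank := Matrix.rank_transpose Aq
  have hBt : Bqᵀ.rank = Bq.rank := Matrix.rank_transpose Bq
  have hfr : Module.finrank ℚ (LinearMap.ker Bqᵀ.mulVecLin) = Aqᵀ.rank := by
    have h1 : Aq.rank + Bq.rank = n := by
      rw [← hkerA]
      simpa [Matrix.rank] using hrnA
    have h2 : Bq.rank + Module.finrank ℚ (LinearMap.ker Bqᵀ.mulVecLin) = n := by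
      rw [← hBt]
      simpa [Matrix.rank] using hrnBt
    omega
  have hle : LinearMap.range Aqᵀ.mulVecLin ≤ LinearMap.ker Bqᵀ.mulVecLin := by
    rintro x ⟨w, rfl⟩
    have : Bqᵀ * Aqᵀ = 0 := by rw [← Matrix.transpose_mul, hAB, Matrix.transpose_zero]
    simp [Matrix.mulVecLin_apply, Matrix.mulVec_mulVec, this, hAB]
  have heq : LinearMap.range Aqᵀ.mulVecLin = LinearMap.ker Bqᵀ.mulVecLin :=
    Submodule.eq_of_le_of_finrank_eq hle (by rw [hfr]; rfl)
  -- construct p, q with f ∘ p + q ∘ g = id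
  set f : (Fin d → ℚ) →ₗ[ℚ] (Fin n → ℚ) := Aqᵀ.mulVecLin with hf
  set g : (Fin n → ℚ) →ₗ[ℚ] (Fin m → ℚ) := Bqᵀ.mulVecLin with hg
  obtain ⟨W, hW⟩ := Submodule.exists_isCompl (LinearMap.ker g)
  set π : (Fin n → ℚ) →ₗ[ℚ] (Fin n → ℚ) :=
    (LinearMap.ker g).subtype ∘ₗ (LinearMap.ker g).projectionOnto W hW with hπ
  have hπmem : ∀ x, π x ∈ LinearMap.ker g := fun x =>
    ((LinearMap.ker g).projectionOnto W hW x).2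
  have hπid : ∀ x ∈ LinearMap.ker g, π x = x := by
    intro x hx
    have := Submodule.linearProjOfIsCompl_apply_left hW (⟨x, hx⟩ : LinearMap.ker g)
    simp only [hπ, LinearMap.comp_apply]
    rw [this]
    rfl
  obtain ⟨sf, hsf⟩ := f.rangeRestrict.exists_rightInverse_of_surjective f.range_rangeRestrict
  obtain ⟨sg, hsg⟩ := g.rangeRestrict.exists_rightInverse_of_surjective g.range_rangeRestrict
  set π' : (Fin n → ℚ) →ₗ[ℚ] LinearMap.range f :=
    LinearMap.codRestrict _ π (fun x => by rw [heq]; exact hπmem x) with hπ'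
  set p : (Fin n → ℚ) →ₗ[ℚ] (Fin d → ℚ) := sf ∘ₗ π' with hp
  have hfp : ∀ x, f (p x) = π x := by
    intro x
    have h1 : f.rangeRestrict (sf (π' x)) = π' x := congrFun (congrArg DFunLike.coe hsf) (π' x)
    have h2 := congrArg (Subtype.val) h1
    exact h2
  obtain ⟨W2, hW2⟩ := Submodule.exists_isCompl (LinearMap.range g)
  set h : (Fin n → ℚ) →ₗ[ℚ] (Fin n → ℚ) := LinearMap.id - π with hh
  set q : (Fin m → ℚ) →ₗ[ℚ] (Fin n → ℚ) :=
    (h ∘ₗ sg) ∘ₗ (LinearMap.range g).projectionOnto W2 hW2 with hq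
  have hqg : ∀ x, q (g x) = h x := by
    intro x
    have h1 : (LinearMap.range g).projectionOnto W2 hW2 (g x) = g.rangeRestrict x :=
      Submodule.linearProjOfIsCompl_apply_left hW2 (g.rangeRestrict x)
    have h2 : g.rangeRestrict (sg (g.rangeRestrict x)) = g.rangeRestrict x :=
      congrFun (congrArg DFunLike.coe hsg) (g.rangeRestrict x)
    have h3 : g (sg (g.rangeRestrict x)) = g x := congrArg Subtype.val h2
    have h4 : sg (g.rangeRestrict x) - x ∈ LinearMap.ker g := by
      rw [LinearMap.mem_ker, map_sub, h3, sub_self]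
    have h5 : π (sg (g.rangeRestrict x) - x) = sg (g.rangeRestrict x) - x := hπid _ h4
    have : q (g x) = h (sg (g.rangeRestrict x)) := by rw [hq]; simp [h1]
    rw [this, hh]
    simp only [LinearMap.sub_apply, LinearMap.id_apply]
    have h6 : π (sg (g.rangeRestrict x)) - π x = sg (g.rangeRestrict x) - x := by
      rw [← map_sub, h5]
    rw [sub_eq_sub_iff_sub_eq_sub]
    exact h6.symm
  have hiden : f ∘ₗ p + q ∘ₗ g = LinearMap.id := by
    apply LinearMap.ext
    intro x
    simp only [LinearMap.add_apply, LinearMap.comp_apply, LinearMap.id_apply]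
    rw [hfp, hqg, hh]
    simp
  -- matrix identity over ℚ
  set P : Matrix (Fin d) (Fin n) ℚ := LinearMap.toMatrix' p with hP
  set Q : Matrix (Fin n) (Fin m) ℚ := LinearMap.toMatrix' q with hQ
  have hmat : Aqᵀ * P + Q * Bqᵀ = (1 : Matrix (Fin n) (Fin n) ℚ) := by
    have h2 := congrArg LinearMap.toMatrix' hiden
    rw [map_add, LinearMap.toMatrix'_comp, LinearMap.toMatrix'_comp, LinearMap.toMatrix'_id] at h2
    have hfA : LinearMap.toMatrix' f = Aqᵀ := by
      rw [hf, ← Matrix.toLin'_apply', LinearMap.toMatrix'_toLin']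
    have hgB : LinearMap.toMatrix' g = Bqᵀ := by
      rw [hg, ← Matrix.toLin'_apply', LinearMap.toMatrix'_toLin']
    rwa [hfA, hgB, ← hP, ← hQ] at h2
  -- transfer to ℝ
  set φ : ℚ →+* ℝ := algebraMap ℚ ℝ with hφ
  have hmatR : (Aqᵀ.map φ) * (P.map φ) + (Q.map φ) * (Bqᵀ.map φ) = 1 := by
    have := congrArg (fun M => M.map (φ : ℚ → ℝ)) hmat
    simpa [Matrix.map_add, Matrix.map_mul, Matrix.map_one] using this
  have hBu : (Bqᵀ.map (φ : ℚ → ℝ)).mulVec u = 0 := by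
    funext k
    have := hu k
    simp only [Matrix.mulVec, dotProduct, Matrix.map_apply, Matrix.transpose_apply,
      hBq, Pi.zero_apply]
    rw [← this]
    congr 1; funext i
    simp [hφ, mul_comm]
  refine ⟨(P.map (φ : ℚ → ℝ)).mulVec u, ?_⟩
  intro i
  have hkey : ((Aqᵀ.map φ) * (P.map φ) + (Q.map φ) * (Bqᵀ.map φ)).mulVec u = u := by
    rw [hmatR, Matrix.one_mulVec]
  rw [Matrix.add_mulVec, ← Matrix.mulVec_mulVec, ← Matrix.mulVec_mulVec, hBu,
    Matrix.mulVec_zero, add_zero] at hkey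
  have := congrFun hkey i
  rw [← this]
  simp [Matrix.mulVec, dotProduct, Matrix.map_apply, Matrix.transpose_apply, hAq, hφ]

/-- Gale duality for faces: Let `A` be a `d × n` integer matrix with `(1,…,1)`
in its `ℚ`-row space, `P = Conv(a_1,…,a_n)` the convex hull of its columns in `ℝ^d`, and let
`B` be an `n × (n−d)` integer Gale dual: its columns span `ker(A)` over `ℚ`.  For
`I ⊆ {1,…,n}` there is a face `β` of `P` with `a_i ∈ β ↔ i ∈ I` if and only if there are
positive reals `t_i` (`i ∈ Iᶜ`) with `Σ_{i ∈ Iᶜ} t_i b_i = 0`. -/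
theorem gale_duality_faces
    (d n : ℕ) (hd : d ≤ n)
    (A : Matrix (Fin d) (Fin n) ℤ) (B : Matrix (Fin n) (Fin (n - d)) ℤ)
    (hones : ∃ y : Fin d → ℚ, ∀ j : Fin n, ∑ i, y i * (A i j : ℚ) = 1)
    (hGale : LinearMap.ker (Matrix.mulVecLin (A.map ((↑) : ℤ → ℚ))) =
      Submodule.span ℚ (Set.range fun k : Fin (n - d) => fun i : Fin n => (B i k : ℚ)))
    (I : Finset (Fin n)) :
    (∃ β : Set (Fin d → ℝ),
        IsExposed ℝ
          (convexHull ℝ (Set.range fun j : Fin n => fun i : Fin d => (A i j : ℝ))) β ∧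
        ∀ i : Fin n, (fun r => (A r i : ℝ)) ∈ β ↔ i ∈ I) ↔
      ∃ t : Fin n → ℝ, (∀ i ∉ I, 0 < t i) ∧
        ∑ i ∈ Iᶜ, t i • (fun k : Fin (n - d) => (B i k : ℝ)) = 0 := by
  classical
  set P : Set (Fin d → ℝ) :=
    convexHull ℝ (Set.range fun j : Fin n => fun i : Fin d => (A i j : ℝ)) with hPdef
  have hABQ : (A.map ((↑) : ℤ → ℚ)) * (B.map ((↑) : ℤ → ℚ)) = 0 := gale_AB A B hGale
  have hABQ' : ∀ r k, ∑ i : Fin n, (A r i : ℚ) * (B i k : ℚ) = 0 := by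
    intro r k
    have h1 : ((A.map ((↑) : ℤ → ℚ)) * (B.map ((↑) : ℤ → ℚ))) r k = 0 := by rw [hABQ]; rfl
    simpa [Matrix.mul_apply, Matrix.map_apply] using h1
  have hABR : ∀ r k, ∑ i : Fin n, (A r i : ℝ) * (B i k : ℝ) = 0 := by
    intro r k
    have := congrArg (fun x : ℚ => (x : ℝ)) (hABQ' r k)
    push_cast at this
    exact this
  have hBsumQ : ∀ k, ∑ i : Fin n, (B i k : ℚ) = 0 := by
    obtain ⟨y, hy⟩ := hones
    intro k
    have hstep : ∑ i : Fin n, (B i k : ℚ) = ∑ i : Fin n, ∑ r : Fin d,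
        y r * ((A r i : ℚ) * (B i k : ℚ)) := by
      refine Finset.sum_congr rfl fun i _ => ?_
      calc (B i k : ℚ) = (∑ r, y r * (A r i : ℚ)) * (B i k : ℚ) := by rw [hy i, one_mul]
        _ = ∑ r, y r * ((A r i : ℚ) * (B i k : ℚ)) := by
            rw [Finset.sum_mul]
            exact Finset.sum_congr rfl fun r _ => mul_assoc _ _ _
    rw [hstep, Finset.sum_comm]
    refine Finset.sum_eq_zero fun r _ => ?_
    rw [← Finset.mul_sum, hABQ' r k, mul_zero]
  have hBsumR : ∀ k, ∑ i : Fin n, (B i k : ℝ) = 0 := by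
    intro k
    have := congrArg (fun x : ℚ => (x : ℝ)) (hBsumQ k)
    push_cast at this
    exact this
  have haP : ∀ i : Fin n, (fun r => (A r i : ℝ)) ∈ P := fun i =>
    subset_convexHull ℝ _ ⟨i, rfl⟩
  constructor
  · rintro ⟨β, hexp, hmem⟩
    by_cases hβ : β.Nonempty
    · obtain ⟨l, hl⟩ := hexp hβ
      obtain ⟨x0, hx0⟩ := hβ
      rw [hl] at hx0 hmem
      obtain ⟨hx0P, hx0max⟩ := hx0
      set c := l x0 with hc
      have hIc : ∀ i ∈ I, l (fun r => (A r i : ℝ)) = c := by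
        intro i hi
        obtain ⟨h1, h2⟩ := (hmem i).2 hi
        exact le_antisymm (hx0max _ (haP i)) (h2 x0 hx0P)
      have hIc' : ∀ i ∉ I, l (fun r => (A r i : ℝ)) < c := by
        intro i hi
        by_contra hcon
        push_neg at hcon
        exact hi ((hmem i).1 ⟨haP i, fun y hy => (hx0max y hy).trans hcon⟩)
      have hrep : ∀ x : Fin d → ℝ, l x = ∑ r, x r * l (Pi.single r 1) := by
        intro x
        have hx : x = ∑ r, x r • (Pi.single r 1 : Fin d → ℝ) := by
          funext s
          simp [Finset.sum_apply, Pi.single_apply]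
        conv_lhs => rw [hx]
        rw [map_sum]
        simp
      refine ⟨fun i => c - l (fun r => (A r i : ℝ)), fun i hi => sub_pos.2 (hIc' i hi), ?_⟩
      funext k
      simp only [Finset.sum_apply, Pi.smul_apply, smul_eq_mul, Pi.zero_apply]
      have hext : ∑ i ∈ Iᶜ, (c - l (fun r => (A r i : ℝ))) * (B i k : ℝ)
          = ∑ i : Fin n, (c - l (fun r => (A r i : ℝ))) * (B i k : ℝ) := by
        refine Finset.sum_subset (Finset.subset_univ _) fun i _ hi => ?_
        have hiI : i ∈ I := by simpa using hi
        rw [hIc i hiI, sub_self, zero_mul]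
      rw [hext]
      have hsplit : ∀ i : Fin n, (c - l (fun r => (A r i : ℝ))) * (B i k : ℝ)
          = c * (B i k : ℝ) - ∑ r, l (Pi.single r 1) * ((A r i : ℝ) * (B i k : ℝ)) := by
        intro i
        rw [sub_mul, hrep (fun r => (A r i : ℝ))]
        congr 1
        rw [Finset.sum_mul]
        exact Finset.sum_congr rfl fun r _ => by ring
      rw [Finset.sum_congr rfl fun i _ => hsplit i, Finset.sum_sub_distrib, ← Finset.mul_sum,
        hBsumR k, mul_zero, Finset.sum_comm, zero_sub, neg_eq_zero]
      refine Finset.sum_eq_zero fun r _ => ?_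
      rw [← Finset.mul_sum, hABR r k, mul_zero]
    · have hI : I = ∅ := by
        ext i
        simp only [Finset.notMem_empty, iff_false]
        intro hi
        exact hβ ⟨_, (hmem i).2 hi⟩
      subst hI
      refine ⟨fun _ => 1, fun i _ => one_pos, ?_⟩
      funext k
      simp only [Finset.compl_empty, Finset.sum_apply, Pi.smul_apply, smul_eq_mul, one_mul,
        Pi.zero_apply]
      simpa using hBsumR k
  · rintro ⟨t, ht, hsum⟩
    set u : Fin n → ℝ := fun i => if i ∈ I then 0 else t i with hu
    have hu0 : ∀ k, ∑ i : Fin n, u i * (B i k : ℝ) = 0 := by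
      intro k
      have h1 := congrFun hsum k
      simp only [Finset.sum_apply, Pi.smul_apply, smul_eq_mul, Pi.zero_apply] at h1
      have h2 : ∑ i : Fin n, u i * (B i k : ℝ) = ∑ i ∈ Iᶜ, u i * (B i k : ℝ) :=
        (Finset.sum_subset (Finset.subset_univ _) fun i _ hi => by
          have hiI : i ∈ I := by simpa using hi
          simp [hu, hiI]).symm
      rw [h2, ← h1]
      refine Finset.sum_congr rfl fun i hi => ?_
      have hiI : i ∉ I := Finset.mem_compl.mp hi
      simp [hu, hiI]
    obtain ⟨w, hw⟩ := gale_transfer A B hGale u hu0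
    set l : (Fin d → ℝ) →L[ℝ] ℝ := ∑ r, (-w r) • ContinuousLinearMap.proj r with hldef
    have hl : ∀ x : Fin d → ℝ, l x = ∑ r, -w r * x r := by
      intro x
      simp [hldef]
    have hla : ∀ i, l (fun r => (A r i : ℝ)) = -u i := by
      intro i
      rw [hl]
      have : ∑ r, -w r * (A r i : ℝ) = -(∑ r, (A r i : ℝ) * w r) := by
        rw [← Finset.sum_neg_distrib]
        exact Finset.sum_congr rfl fun r _ => by ring
      rw [this, ← hw i]
    have hunn : ∀ i, 0 ≤ u i := by
      intro i
      by_cases hi : i ∈ I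
      · simp [hu, hi]
      · simp only [hu, hi, if_false]
        exact (ht i hi).le
    have hP0 : ∀ y ∈ P, l y ≤ 0 := by
      intro y hy
      have hsub : (Set.range fun j : Fin n => fun i : Fin d => (A i j : ℝ)) ⊆ {y | l y ≤ 0} := by
        rintro _ ⟨i, rfl⟩
        rw [Set.mem_setOf_eq, hla i, neg_nonpos]
        exact hunn i
      exact convexHull_min hsub
        (convex_halfSpace_le (IsLinearMap.mk l.map_add fun c x => l.map_smul c x) 0) hy
    rcases I.eq_empty_or_nonempty with hI | hIne
    · subst hI
      refine ⟨∅, fun h => (Set.not_nonempty_empty h).elim, by simp⟩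
    · obtain ⟨i0, hi0⟩ := hIne
      refine ⟨{x ∈ P | ∀ y ∈ P, l y ≤ l x}, fun _ => ⟨l, rfl⟩, ?_⟩
      intro i
      constructor
      · rintro ⟨hiP, hmax⟩
        by_contra hiI
        have h1 := hmax _ (haP i0)
        rw [hla, hla] at h1
        have h2 : u i0 = 0 := by simp [hu, hi0]
        have h3 : u i = t i := by simp [hu, hiI]
        have h4 := ht i hiI
        rw [h2, h3, neg_zero] at h1
        linarith
      · intro hiI
        refine ⟨haP i, fun y hy => ?_⟩
        rw [hla]
        have : u i = 0 := by simp [hu, hiI]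
        rw [this, neg_zero]
        exact hP0 y hy
end
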